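/- arXiv:2111.15163 — 2 statements merged into one kernel-verified Lean document; each statement's English description precedes it below -/
import Mathlib

section
/- Grönwall bound for the energy under the growth condition (a priori estimate in the proof of Lemma 2.2): In the setting of the previous identity—g : ℝ^d → (symmetric positive-definite d×d real matrices) C¹, f, σ : ℝ^d → ℝ C¹, w : [0,T] → ℝ continuous, η ∈ ℝ, H₀(x,p) = ½⟨p, g(x)⁻¹p⟩ + f(x), and (x,p) : [0,T] → ℝ^d × ℝ^d a C¹ solution of x' = g(x)⁻¹p, p_i' = −½⟨p, ∂_i(g⁻¹)(x)p⟩ − ∂_i f(x) − η w ∂_i σ(x)—assume additionally that H₀(y,q) ≥ 0 for all (y,q) and that there exist constants C₁, c₁ > 0 such that |⟨g(y)⁻¹ q, ∇σ(y)⟩| ≤ C₁ + c₁ H₀(y,q) for all (y,q) ∈ ℝ^d × ℝ^d. Then for all t ∈ [0,T], H₀(x(t), p(t)) ≤ ( H₀(x(0), p(0)) + |η| C₁ ∫₀^t |w(s)| ds ) · exp( c₁ |η| ∫₀^t |w(s)| ds ). -/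
/-- Partial derivative of a scalar function on `ℝ^d` in the `i`-th coordinate direction. -/
noncomputable def pdersc {d : ℕ} (i : Fin d) (ψ : (Fin d → ℝ) → ℝ) (y : Fin d → ℝ) : ℝ :=
  fderiv ℝ ψ y (Pi.single i 1)

/-- The gradient of a scalar function on `ℝ^d`, as the vector of its partial derivatives. -/
noncomputable def gradVec {d : ℕ} (ψ : (Fin d → ℝ) → ℝ) (y : Fin d → ℝ) : Fin d → ℝ :=
  fun i => pdersc i ψ y

/-- Entrywise partial derivative of a matrix-valued function on `ℝ^d` in the `i`-th
coordinate direction. -/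
noncomputable def pdermat {d : ℕ} (i : Fin d)
    (g : (Fin d → ℝ) → Matrix (Fin d) (Fin d) ℝ) (y : Fin d → ℝ) :
    Matrix (Fin d) (Fin d) ℝ :=
  Matrix.of fun j k => fderiv ℝ (fun z => g z j k) y (Pi.single i 1)

/-- The mechanical Hamiltonian `H₀(y, q) = ½⟨q, g(y)⁻¹ q⟩ + f(y)`. -/
noncomputable def mechHam {d : ℕ} (g : (Fin d → ℝ) → Matrix (Fin d) (Fin d) ℝ)
    (f : (Fin d → ℝ) → ℝ) (y q : Fin d → ℝ) : ℝ :=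
  (1 / 2) * dotProduct q ((g y)⁻¹.mulVec q) + f y

lemma contDiff_det_comp {d : ℕ} {M : (Fin d → ℝ) → Matrix (Fin d) (Fin d) ℝ}
    (hM : ∀ j k, ContDiff ℝ 1 fun y => M y j k) :
    ContDiff ℝ 1 fun y => (M y).det := by
  simp only [Matrix.det_apply']
  exact ContDiff.sum fun σ _ => contDiff_const.mul (contDiff_prod fun i _ => hM (σ i) i)

lemma contDiff_inv_entry {d : ℕ} {g : (Fin d → ℝ) → Matrix (Fin d) (Fin d) ℝ}
    (hg : ∀ j k, ContDiff ℝ 1 fun y => g y j k) (hdet : ∀ y, (g y).det ≠ 0)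
    (j k : Fin d) : ContDiff ℝ 1 fun y => (g y)⁻¹ j k := by
  have hadj : ContDiff ℝ 1 fun y => (g y).adjugate j k := by
    simp only [Matrix.adjugate_apply]
    apply contDiff_det_comp
    intro a b
    simp only [Matrix.updateRow_apply]
    by_cases h : a = k <;> simp only [h, if_true, if_false]
    · exact contDiff_const
    · exact hg a b
  have hd : ContDiff ℝ 1 fun y => ((g y).det)⁻¹ := (contDiff_det_comp hg).inv hdet
  have heq : (fun y => (g y)⁻¹ j k) = fun y => ((g y).det)⁻¹ * (g y).adjugate j k := by
    funext y
    rw [Matrix.inv_def]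
    simp [Ring.inverse_eq_inv', Matrix.smul_apply, smul_eq_mul]
  rw [heq]; exact hd.mul hadj

lemma fderiv_eq_sum_pdersc {d : ℕ} {ψ : (Fin d → ℝ) → ℝ} {y : Fin d → ℝ}
    (hψ : DifferentiableAt ℝ ψ y) (v : Fin d → ℝ) :
    fderiv ℝ ψ y v = ∑ i, v i * pdersc i ψ y := by
  have hv : v = ∑ i, v i • (Pi.single i 1 : Fin d → ℝ) := by
    conv_lhs => rw [pi_eq_sum_univ v]
    refine Finset.sum_congr rfl fun i _ => ?_
    ext j; simp [Pi.single_apply, eq_comm]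
  conv_lhs => rw [hv]
  rw [map_sum]
  exact Finset.sum_congr rfl fun i _ => by
    rw [map_smul]; rfl

lemma hasDerivAt_comp_scalar {d : ℕ} {ψ : (Fin d → ℝ) → ℝ} (hψ : ContDiff ℝ 1 ψ)
    {x : ℝ → Fin d → ℝ} {t : ℝ} (hx : HasDerivAt x (deriv x t) t) :
    HasDerivAt (fun s => ψ (x s)) (∑ i, deriv x t i * pdersc i ψ (x t)) t := by
  have hd : DifferentiableAt ℝ ψ (x t) := (hψ.differentiable one_ne_zero) (x t)
  have h1 := hd.hasFDerivAt.comp_hasDerivAt t hx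
  rwa [fderiv_eq_sum_pdersc hd] at h1


lemma energy_deriv_algebra {d : ℕ} (a : Matrix (Fin d) (Fin d) ℝ) (q v q' F Sg : Fin d → ℝ)
    (dm : Fin d → Matrix (Fin d) (Fin d) ℝ) (c : ℝ)
    (hsymm : ∀ j k, a j k = a k j)
    (hv : ∀ j, v j = ∑ k, a j k * q k)
    (hq : ∀ j, q' j = -(1/2) * (∑ i, q i * ∑ b, dm j i b * q b) - F j - c * Sg j) :
    (1/2) * (∑ j, ∑ k, (q' j * (a j k * q k)
          + q j * ((∑ i, v i * dm i j k) * q k + a j k * q' k)))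
        + ∑ i, v i * F i
      = -c * ∑ i, v i * Sg i := by
  have hS1 : ∑ j, ∑ k, q' j * (a j k * q k) = ∑ j, q' j * v j :=
    Finset.sum_congr rfl fun j _ => by rw [hv j, Finset.mul_sum]
  have hS3 : ∑ j, ∑ k, q j * (a j k * q' k) = ∑ j, q' j * v j := by
    rw [Finset.sum_comm]
    refine Finset.sum_congr rfl fun k _ => ?_
    rw [hv k, Finset.mul_sum]
    exact Finset.sum_congr rfl fun j _ => by rw [hsymm j k]; ring
  have hS2 : ∑ j, ∑ k, q j * ((∑ i, v i * dm i j k) * q k)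
      = ∑ i, v i * ∑ j, q j * ∑ b, dm i j b * q b := by
    have h1 : (∑ j, ∑ k, q j * ((∑ i, v i * dm i j k) * q k))
        = ∑ j, ∑ k, ∑ i, v i * (q j * (dm i j k * q k)) := by
      refine Finset.sum_congr rfl fun j _ => Finset.sum_congr rfl fun k _ => ?_
      rw [Finset.sum_mul, Finset.mul_sum]
      exact Finset.sum_congr rfl fun i _ => by ring
    have h2 : (∑ j, ∑ k, ∑ i, v i * (q j * (dm i j k * q k)))
        = ∑ i, ∑ j, ∑ k, v i * (q j * (dm i j k * q k)) := by
      rw [show (∑ j, ∑ k, ∑ i : Fin d, v i * (q j * (dm i j k * q k)))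
          = ∑ j, ∑ i, ∑ k, v i * (q j * (dm i j k * q k)) from
        Finset.sum_congr rfl fun j _ => Finset.sum_comm]
      exact Finset.sum_comm
    rw [h1, h2]
    refine Finset.sum_congr rfl fun i _ => ?_
    rw [Finset.mul_sum]
    refine Finset.sum_congr rfl fun j _ => ?_
    simp only [Finset.mul_sum]
  have hsplit : (∑ j, ∑ k, (q' j * (a j k * q k)
          + q j * ((∑ i, v i * dm i j k) * q k + a j k * q' k)))
      = (∑ j, ∑ k, q' j * (a j k * q k))
        + ((∑ j, ∑ k, q j * ((∑ i, v i * dm i j k) * q k))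
          + (∑ j, ∑ k, q j * (a j k * q' k))) := by
    simp only [mul_add, Finset.sum_add_distrib]
  have hSsub : ∑ j, q' j * v j
      = -(1/2) * (∑ j, v j * ∑ i, q i * ∑ b, dm j i b * q b)
        - (∑ j, v j * F j) - c * ∑ j, v j * Sg j := by
    rw [show (∑ j, q' j * v j)
        = ∑ j, ((-(1/2)) * (v j * ∑ i, q i * ∑ b, dm j i b * q b) - v j * F j - c * (v j * Sg j)) from
      Finset.sum_congr rfl fun j _ => by rw [hq j]; ring]
    rw [Finset.sum_sub_distrib, Finset.sum_sub_distrib, ← Finset.mul_sum, ← Finset.mul_sum]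
  rw [hsplit, hS1, hS2, hS3, hSsub]
  ring


/-- **Grönwall bound for the energy under the growth condition.**
If `(x, p)` is a `C¹` solution on `[0,T]` of the perturbed Hamiltonian system
`x' = g(x)⁻¹ p`, `pᵢ' = −½⟨p, ∂ᵢ(g⁻¹)(x) p⟩ − ∂ᵢf(x) − η w ∂ᵢσ(x)`, the energy `H₀ ≥ 0`,
and `|⟨g(y)⁻¹ q, ∇σ(y)⟩| ≤ C₁ + c₁ H₀(y, q)` for all `(y, q)`, then for all `t ∈ [0,T]`,
`H₀(x(t), p(t)) ≤ (H₀(x(0), p(0)) + |η| C₁ ∫₀ᵗ |w|) · exp(c₁ |η| ∫₀ᵗ |w|)`. -/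
theorem gronwall_energy_bound_wong_zakai
    (d : ℕ) (T η : ℝ) (hT : 0 < T)
    (g : (Fin d → ℝ) → Matrix (Fin d) (Fin d) ℝ)
    (hg : ∀ j k : Fin d, ContDiff ℝ 1 fun y => g y j k)
    (hgsymm : ∀ y, (g y).IsSymm) (hgpos : ∀ y, (g y).PosDef)
    (f σ : (Fin d → ℝ) → ℝ) (hf : ContDiff ℝ 1 f) (hσ : ContDiff ℝ 1 σ)
    (w : ℝ → ℝ) (hw : ContinuousOn w (Set.Icc 0 T))
    (x p : ℝ → Fin d → ℝ) (hx : ContDiff ℝ 1 x) (hp : ContDiff ℝ 1 p)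
    (hode : ∀ t ∈ Set.Icc (0 : ℝ) T,
      deriv x t = (g (x t))⁻¹.mulVec (p t) ∧
      ∀ i : Fin d,
        deriv (fun s => p s i) t
          = -(1 / 2) * dotProduct (p t)
              ((pdermat i (fun z => (g z)⁻¹) (x t)).mulVec (p t))
            - pdersc i f (x t) - η * w t * pdersc i σ (x t))
    (hH₀nonneg : ∀ y q : Fin d → ℝ, 0 ≤ mechHam g f y q)
    (C₁ c₁ : ℝ) (hC₁ : 0 < C₁) (hc₁ : 0 < c₁)
    (hgrowth : ∀ y q : Fin d → ℝ,
      |dotProduct ((g y)⁻¹.mulVec q) (gradVec σ y)| ≤ C₁ + c₁ * mechHam g f y q) :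
    ∀ t ∈ Set.Icc (0 : ℝ) T,
      mechHam g f (x t) (p t)
        ≤ (mechHam g f (x 0) (p 0) + |η| * C₁ * ∫ s in (0 : ℝ)..t, |w s|)
            * Real.exp (c₁ * |η| * ∫ s in (0 : ℝ)..t, |w s|) := by
  have hdet : ∀ y, (g y).det ≠ 0 := fun y => (hgpos y).det_pos.ne'
  set A : (Fin d → ℝ) → Matrix (Fin d) (Fin d) ℝ := fun y => (g y)⁻¹ with hAdef
  have hAc : ∀ j k, ContDiff ℝ 1 fun y => A y j k := fun j k => contDiff_inv_entry hg hdet j k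
  have hAsymm : ∀ y (j k : Fin d), A y j k = A y k j := by
    intro y j k
    have h1 : ((g y)⁻¹).transpose = (g y)⁻¹ := by
      rw [Matrix.transpose_nonsing_inv, (hgsymm y).eq]
    have := congrFun (congrFun h1 k) j
    simpa [Matrix.transpose_apply] using this
  set E : ℝ → ℝ := fun t => mechHam g f (x t) (p t) with hEdef
  have hEeq : E = fun s => (1/2) * ∑ j, ∑ k, p s j * (A (x s) j k * p s k) + f (x s) := by
    funext s
    simp [hEdef, mechHam, dotProduct, Matrix.mulVec, Finset.mul_sum]; rfl
  -- derivative of E at any point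
  have hEderiv : ∀ t : ℝ, HasDerivAt E
      ((1/2) * ∑ j, ∑ k, (deriv p t j * (A (x t) j k * p t k)
          + p t j * ((∑ i, deriv x t i * pdersc i (fun z => A z j k) (x t)) * p t k
             + A (x t) j k * deriv p t k))
        + ∑ i, deriv x t i * pdersc i f (x t)) t := by
    intro t
    have hxt : HasDerivAt x (deriv x t) t := (hx.differentiable one_ne_zero t).hasDerivAt
    have hpt : ∀ j, HasDerivAt (fun s => p s j) (deriv p t j) t :=
      hasDerivAt_pi.mp (hp.differentiable one_ne_zero t).hasDerivAt
    have hterm : ∀ j, HasDerivAt (fun s => ∑ k, p s j * (A (x s) j k * p s k))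
        (∑ k, (deriv p t j * (A (x t) j k * p t k)
          + p t j * ((∑ i, deriv x t i * pdersc i (fun z => A z j k) (x t)) * p t k
             + A (x t) j k * deriv p t k))) t := by
      intro j
      refine HasDerivAt.fun_sum fun k _ => ?_
      exact (hpt j).mul ((hasDerivAt_comp_scalar (hAc j k) hxt).mul (hpt k))
    have hsum : HasDerivAt (fun s => ∑ j, ∑ k, p s j * (A (x s) j k * p s k))
        (∑ j, ∑ k, (deriv p t j * (A (x t) j k * p t k)
          + p t j * ((∑ i, deriv x t i * pdersc i (fun z => A z j k) (x t)) * p t k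
             + A (x t) j k * deriv p t k))) t :=
      HasDerivAt.fun_sum fun j _ => hterm j
    have hfc := hasDerivAt_comp_scalar hf hxt
    have := (hsum.const_mul (1/2 : ℝ)).add hfc
    rw [hEeq]
    exact this
  
  -- identify the derivative on [0,T]
  have key : ∀ t ∈ Set.Icc (0:ℝ) T,
      ((1/2) * ∑ j, ∑ k, (deriv p t j * (A (x t) j k * p t k)
          + p t j * ((∑ i, deriv x t i * pdersc i (fun z => A z j k) (x t)) * p t k
             + A (x t) j k * deriv p t k))
        + ∑ i, deriv x t i * pdersc i f (x t))
      = -(η * w t) * dotProduct ((g (x t))⁻¹.mulVec (p t)) (gradVec σ (x t)) := by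
    intro t ht
    obtain ⟨hv, hq'⟩ := hode t ht
    have hvj : ∀ j, deriv x t j = ∑ k, A (x t) j k * p t k := by
      intro j; rw [hv]; simp [Matrix.mulVec, dotProduct]; rfl
    have hqj : ∀ j, deriv p t j
        = -(1/2) * (∑ i, p t i * ∑ b, pdermat j A (x t) i b * p t b)
          - pdersc j f (x t) - η * w t * pdersc j σ (x t) := by
      intro j
      have hd : deriv (fun s => p s j) t = deriv p t j :=
        (hasDerivAt_pi.mp (hp.differentiable one_ne_zero t).hasDerivAt j).deriv
      rw [← hd, hq' j]
      simp [dotProduct, Matrix.mulVec]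
    have hrhs : dotProduct ((g (x t))⁻¹.mulVec (p t)) (gradVec σ (x t))
        = ∑ i, deriv x t i * pdersc i σ (x t) := by
      simp only [dotProduct]
      refine Finset.sum_congr rfl fun i _ => ?_
      rw [← hv]
      rfl
    have halg := energy_deriv_algebra (A (x t)) (p t) (deriv x t) (deriv p t)
        (fun i => pdersc i f (x t)) (fun i => pdersc i σ (x t))
        (fun i => pdermat i A (x t)) (η * w t)
        (fun j k => hAsymm (x t) j k) hvj hqj
    rw [hrhs]
    exact halg
  have hEderivIcc : ∀ t ∈ Set.Icc (0:ℝ) T, HasDerivAt E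
      (-(η * w t) * dotProduct ((g (x t))⁻¹.mulVec (p t)) (gradVec σ (x t))) t :=
    fun t ht => key t ht ▸ hEderiv t
  have hEdiff : Differentiable ℝ E := fun t => (hEderiv t).differentiableAt
  -- the integral of |w|
  set W : ℝ → ℝ := fun t => ∫ s in (0:ℝ)..t, |w s| with hWdef
  have habs : ContinuousOn (fun s => |w s|) (Set.Icc 0 T) := hw.abs
  have hWcont : ContinuousOn W (Set.Icc 0 T) := by
    have h1 := intervalIntegral.continuousOn_primitive (μ := MeasureTheory.volume) (f := fun s => |w s|) (a := 0) (b := T)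
      habs.integrableOn_Icc
    exact h1.congr fun t ht => intervalIntegral.integral_of_le ht.1
  have hW' : ∀ t ∈ Set.Ioo (0:ℝ) T, HasDerivAt W (|w t|) t := by
    intro t ht
    have hmem : Set.Icc (0:ℝ) T ∈ nhds t := Icc_mem_nhds ht.1 ht.2
    have hcw : ContinuousAt (fun s => |w s|) t := habs.continuousAt hmem
    have hii : IntervalIntegrable (fun s => |w s|) MeasureTheory.volume 0 t := by
      apply ContinuousOn.intervalIntegrable
      apply habs.mono
      rw [Set.uIcc_of_le ht.1.le]
      exact Set.Icc_subset_Icc le_rfl ht.2.le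
    have hsm : StronglyMeasurableAtFilter (fun s => |w s|) (nhds t) MeasureTheory.volume :=
      (habs.mono Set.Ioo_subset_Icc_self).stronglyMeasurableAtFilter isOpen_Ioo t ht
    exact intervalIntegral.integral_hasDerivAt_right hii hsm hcw
  -- the auxiliary function G
  set G : ℝ → ℝ := fun t => (E t + C₁/c₁) * Real.exp (-(c₁ * |η|) * W t) with hGdef
  have hG' : ∀ t ∈ Set.Ioo (0:ℝ) T, HasDerivAt G
      ((-(η * w t) * dotProduct ((g (x t))⁻¹.mulVec (p t)) (gradVec σ (x t)))
          * Real.exp (-(c₁ * |η|) * W t)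
        + (E t + C₁/c₁) * (Real.exp (-(c₁ * |η|) * W t) * (-(c₁ * |η|) * |w t|))) t := by
    intro t ht
    have h1 := (hEderivIcc t (Set.Ioo_subset_Icc_self ht)).add_const (C₁/c₁)
    have h2 := ((hW' t ht).const_mul (-(c₁ * |η|))).exp
    exact h1.mul h2
  have hGanti : AntitoneOn G (Set.Icc 0 T) := by
    apply antitoneOn_of_deriv_nonpos (convex_Icc 0 T)
    · exact (hEdiff.continuous.continuousOn.add continuousOn_const).mul
        (Real.continuous_exp.comp_continuousOn (continuousOn_const.mul hWcont))
    · rw [interior_Icc]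
      exact fun t ht => ((hG' t ht).differentiableAt).differentiableWithinAt
    · rw [interior_Icc]
      intro t ht
      rw [(hG' t ht).deriv]
      have hexp : 0 < Real.exp (-(c₁ * |η|) * W t) := Real.exp_pos _
      set S := dotProduct ((g (x t))⁻¹.mulVec (p t)) (gradVec σ (x t)) with hSdef
      have h4 : |S| ≤ C₁ + c₁ * E t := hgrowth (x t) (p t)
      have h3 : |(-(η * w t)) * S| = |η| * |w t| * |S| := by
        rw [abs_mul, abs_neg, abs_mul]
      have h5 : -(η * w t) * S ≤ |η| * |w t| * (C₁ + c₁ * E t) :=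
        le_trans (le_abs_self _) (by rw [h3]; exact mul_le_mul_of_nonneg_left h4 (by positivity))
      have hcc : c₁ * (C₁ / c₁) = C₁ := by field_simp
      have hw0 : (0:ℝ) ≤ |w t| := abs_nonneg _
      have hn0 : (0:ℝ) ≤ |η| := abs_nonneg _
      nlinarith [mul_le_mul_of_nonneg_right h5 hexp.le, hexp, hcc,
        mul_nonneg (mul_nonneg hn0 hw0) hexp.le]
  -- conclusion
  intro t ht
  have hmono : G t ≤ G 0 := hGanti (Set.left_mem_Icc.mpr hT.le) ht ht.1
  have hW0 : W 0 = 0 := intervalIntegral.integral_same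
  have hG0 : G 0 = E 0 + C₁/c₁ := by rw [hGdef]; simp [hW0]
  set K := c₁ * |η| * W t with hKdef
  have hKW : -(c₁ * |η|) * W t = -K := by rw [hKdef]; ring
  have hexpK : 0 < Real.exp K := Real.exp_pos _
  have he1 : Real.exp (-K) * Real.exp K = 1 := by rw [← Real.exp_add]; simp
  have h2 : (E t + C₁/c₁) * Real.exp (-K) ≤ E 0 + C₁/c₁ := by
    rw [← hG0, ← hKW]; exact hmono
  have h3 : E t + C₁/c₁ ≤ (E 0 + C₁/c₁) * Real.exp K := by
    have := mul_le_mul_of_nonneg_right h2 hexpK.le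
    rwa [mul_assoc, he1, mul_one] at this
  have hexpineq : Real.exp K - 1 ≤ K * Real.exp K := by
    nlinarith [Real.add_one_le_exp (-K), he1, hexpK]
  have hfin : (C₁/c₁) * Real.exp K - C₁/c₁ ≤ |η| * C₁ * W t * Real.exp K := by
    have hXK : |η| * C₁ * W t = (C₁/c₁) * K := by rw [hKdef]; field_simp
    rw [hXK]
    have hC : 0 < C₁/c₁ := div_pos hC₁ hc₁
    nlinarith [hexpineq, hC]
  have hfinal : E t ≤ (E 0 + |η| * C₁ * W t) * Real.exp K := by nlinarith [h3, hfin]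
  exact hfinal
end

section
/- Madelung transform of the Madelung system solves the Wong–Zakai nonlinear Schrödinger equation (first direction of Proposition 4.1): Let d ∈ ℕ, T > 0, λ ∈ ℝ, let f : ℝ → ℝ be continuous, let W : [0,T] × ℝ^d → ℝ be continuous, and let ρ, S : [0,T] × ℝ^d → ℝ be C¹ in t and C² in x with ρ(t,x) > 0 for all (t,x). Define u(t,x) := √(ρ(t,x)) e^{i S(t,x)}. If ∂_t ρ = −2 ∇·(ρ ∇S) and ∂_t S = −|∇S|² + Δρ/(2ρ) − |∇ρ|²/(4ρ²) + λ f(ρ) + W(t,x) hold at every point of [0,T] × ℝ^d, then u satisfies ∂_t u = i Δ_x u + i λ f(|u|²) u + i u W(t,x) at every point of [0,T] × ℝ^d. -/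
open scoped RealInnerProductSpace

/-- The spatial Laplacian of a real-valued function on `ℝ^d`. -/
noncomputable def lapR {d : ℕ} (ψ : EuclideanSpace ℝ (Fin d) → ℝ)
    (x : EuclideanSpace ℝ (Fin d)) : ℝ :=
  ∑ i, fderiv ℝ (fun y => fderiv ℝ ψ y (EuclideanSpace.single i 1)) x (EuclideanSpace.single i 1)

/-- The spatial Laplacian of a complex-valued function on `ℝ^d`. -/
noncomputable def lapC {d : ℕ} (ψ : EuclideanSpace ℝ (Fin d) → ℂ)
    (x : EuclideanSpace ℝ (Fin d)) : ℂ :=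
  ∑ i, fderiv ℝ (fun y => fderiv ℝ ψ y (EuclideanSpace.single i 1)) x (EuclideanSpace.single i 1)

/-- The divergence of a vector field on `ℝ^d`. -/
noncomputable def divg {d : ℕ}
    (V : EuclideanSpace ℝ (Fin d) → EuclideanSpace ℝ (Fin d))
    (x : EuclideanSpace ℝ (Fin d)) : ℝ :=
  ∑ i, fderiv ℝ (fun y => V y i) x (EuclideanSpace.single i 1)

/-- The Madelung transform `u = √ρ e^{iS}` of the pair `(ρ, S)`. -/
noncomputable def madelung {d : ℕ} (ρ S : ℝ → EuclideanSpace ℝ (Fin d) → ℝ)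
    (t : ℝ) (x : EuclideanSpace ℝ (Fin d)) : ℂ :=
  (Real.sqrt (ρ t x) : ℂ) * Complex.exp (Complex.I * (S t x : ℂ))

lemma grad_coord {d : ℕ} (f : EuclideanSpace ℝ (Fin d) → ℝ) (x : EuclideanSpace ℝ (Fin d))
    (i : Fin d) : gradient f x i = fderiv ℝ f x (EuclideanSpace.single i 1) := by
  have h : ⟪gradient f x, EuclideanSpace.single i (1:ℝ)⟫
      = fderiv ℝ f x (EuclideanSpace.single i 1) :=
    InnerProductSpace.toDual_symm_apply
  rw [EuclideanSpace.inner_single_right] at h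
  simpa using h

lemma norm_grad_sq {d : ℕ} (f : EuclideanSpace ℝ (Fin d) → ℝ) (x : EuclideanSpace ℝ (Fin d)) :
    ‖gradient f x‖ ^ 2 = ∑ i, (fderiv ℝ f x (EuclideanSpace.single i 1)) ^ 2 := by
  rw [← real_inner_self_eq_norm_sq, PiLp.inner_apply]
  refine Finset.sum_congr rfl fun i _ => ?_
  rw [grad_coord]
  simp [sq]

lemma fderiv_mul_self {d : ℕ} (sp : EuclideanSpace ℝ (Fin d) → ℝ) (hsp : Differentiable ℝ sp)
    (y : EuclideanSpace ℝ (Fin d)) :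
    fderiv ℝ (fun z => sp z * sp z) y = (2 * sp y) • fderiv ℝ sp y := by
  erw [((hsp y).hasFDerivAt.mul (hsp y).hasFDerivAt).fderiv]
  rw [two_mul, add_smul]

lemma lapR_mul_self {d : ℕ} (sp : EuclideanSpace ℝ (Fin d) → ℝ) (hsp : ContDiff ℝ 2 sp)
    (x : EuclideanSpace ℝ (Fin d)) :
    lapR (fun z => sp z * sp z) x
      = 2 * sp x * (∑ i, fderiv ℝ (fun y => fderiv ℝ sp y (EuclideanSpace.single i 1)) x
            (EuclideanSpace.single i 1))
        + 2 * ∑ i, (fderiv ℝ sp x (EuclideanSpace.single i 1)) ^ 2 := by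
  have one_le : (1 : WithTop ℕ∞) ≤ 2 := by norm_num
  have hspd : Differentiable ℝ sp := hsp.differentiable (by norm_num)
  have hspi : ∀ i : Fin d, ContDiff ℝ 1 fun y => fderiv ℝ sp y (EuclideanSpace.single i 1) :=
    fun i => (hsp.fderiv_right (by norm_num)).clm_apply contDiff_const
  unfold lapR
  have key : ∀ i : Fin d,
      fderiv ℝ (fun y => fderiv ℝ (fun z => sp z * sp z) y (EuclideanSpace.single i 1)) x
          (EuclideanSpace.single i 1)
      = (2 * sp x) * fderiv ℝ (fun y => fderiv ℝ sp y (EuclideanSpace.single i 1)) x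
            (EuclideanSpace.single i 1)
        + 2 * (fderiv ℝ sp x (EuclideanSpace.single i 1)) ^ 2 := by
    intro i
    have hfun : (fun y => fderiv ℝ (fun z => sp z * sp z) y (EuclideanSpace.single i 1))
        = fun y => (2 * sp y) * fderiv ℝ sp y (EuclideanSpace.single i 1) := by
      funext y; rw [fderiv_mul_self sp hspd y]; simp [smul_eq_mul]
    rw [hfun]
    have h1 : HasFDerivAt (fun y => 2 * sp y) ((2:ℝ) • fderiv ℝ sp x) x :=
      (hspd x).hasFDerivAt.const_mul 2
    have h2 : HasFDerivAt (fun y => fderiv ℝ sp y (EuclideanSpace.single i 1))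
        (fderiv ℝ (fun y => fderiv ℝ sp y (EuclideanSpace.single i 1)) x) x :=
      (((hspi i).differentiable one_ne_zero) x).hasFDerivAt
    erw [(h1.mul h2).fderiv]
    simp [smul_eq_mul]
    ring
  rw [Finset.sum_congr rfl fun i _ => key i, Finset.sum_add_distrib,
    ← Finset.mul_sum, ← Finset.mul_sum]

lemma divg_smul_grad {d : ℕ} (p q : EuclideanSpace ℝ (Fin d) → ℝ)
    (hp : Differentiable ℝ p) (hq : ContDiff ℝ 2 q) (x : EuclideanSpace ℝ (Fin d)) :
    divg (fun y => p y • gradient q y) x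
      = ∑ i, (fderiv ℝ p x (EuclideanSpace.single i 1) * fderiv ℝ q x (EuclideanSpace.single i 1)
          + p x * fderiv ℝ (fun y => fderiv ℝ q y (EuclideanSpace.single i 1)) x
              (EuclideanSpace.single i 1)) := by
  have hqi : ∀ i : Fin d, ContDiff ℝ 1 fun y => fderiv ℝ q y (EuclideanSpace.single i 1) :=
    fun i => (hq.fderiv_right (by norm_num)).clm_apply contDiff_const
  unfold divg
  refine Finset.sum_congr rfl fun i _ => ?_
  have hfun : (fun y => (p y • gradient q y) i)
      = fun y => p y * fderiv ℝ q y (EuclideanSpace.single i 1) := by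
    funext y
    rw [← grad_coord]
    simp
  rw [hfun]
  have h2 : HasFDerivAt (fun y => fderiv ℝ q y (EuclideanSpace.single i 1))
      (fderiv ℝ (fun y => fderiv ℝ q y (EuclideanSpace.single i 1)) x) x :=
    (((hqi i).differentiable one_ne_zero) x).hasFDerivAt
  erw [((hp x).hasFDerivAt.mul h2).fderiv]
  simp [smul_eq_mul]
  ring

lemma spatial {d : ℕ} (sp q : EuclideanSpace ℝ (Fin d) → ℝ)
    (hsp : ContDiff ℝ 2 sp) (hq : ContDiff ℝ 2 q) (x : EuclideanSpace ℝ (Fin d)) :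
    lapC (fun y => ((sp y : ℝ) : ℂ) * Complex.exp (Complex.I * ((q y : ℝ) : ℂ))) x
      = Complex.exp (Complex.I * ((q x : ℝ) : ℂ)) *
          ((↑(∑ i, fderiv ℝ (fun y => fderiv ℝ sp y (EuclideanSpace.single i 1)) x
              (EuclideanSpace.single i 1)) : ℂ)
            + 2 * Complex.I * (↑(∑ i, fderiv ℝ sp x (EuclideanSpace.single i 1)
                * fderiv ℝ q x (EuclideanSpace.single i 1)) : ℂ)
            + Complex.I * (sp x : ℂ) * (↑(∑ i, fderiv ℝ (fun y => fderiv ℝ q y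
                (EuclideanSpace.single i 1)) x (EuclideanSpace.single i 1)) : ℂ)
            - (sp x : ℂ) * (↑(∑ i, (fderiv ℝ q x (EuclideanSpace.single i 1)) ^ 2) : ℂ)) := by
  have one_le : (1 : WithTop ℕ∞) ≤ 2 := by norm_num
  have hspd : Differentiable ℝ sp := hsp.differentiable (by norm_num)
  have hqd : Differentiable ℝ q := hq.differentiable (by norm_num)
  have hspi : ∀ i : Fin d, ContDiff ℝ 1 fun y => fderiv ℝ sp y (EuclideanSpace.single i 1) :=
    fun i => (hsp.fderiv_right (by norm_num)).clm_apply contDiff_const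
  have hqi : ∀ i : Fin d, ContDiff ℝ 1 fun y => fderiv ℝ q y (EuclideanSpace.single i 1) :=
    fun i => (hq.fderiv_right (by norm_num)).clm_apply contDiff_const
  have hceD : ∀ y, HasFDerivAt (fun z => Complex.exp (Complex.I * ((q z : ℝ) : ℂ)))
      (Complex.exp (Complex.I * ((q y : ℝ) : ℂ)) •
        (Complex.I • (Complex.ofRealCLM.comp (fderiv ℝ q y)))) y := by
    intro y
    have h1 : HasFDerivAt (fun z => ((q z : ℝ) : ℂ))
        (Complex.ofRealCLM.comp (fderiv ℝ q y)) y :=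
      Complex.ofRealCLM.hasFDerivAt.comp y (hqd y).hasFDerivAt
    exact (h1.const_mul Complex.I).cexp
  have hspC : ∀ y, HasFDerivAt (fun z => ((sp z : ℝ) : ℂ))
      (Complex.ofRealCLM.comp (fderiv ℝ sp y)) y :=
    fun y => Complex.ofRealCLM.hasFDerivAt.comp y (hspd y).hasFDerivAt
  have hfd : ∀ i : Fin d,
      (fun y => fderiv ℝ (fun z => ((sp z : ℝ) : ℂ) * Complex.exp (Complex.I * ((q z : ℝ) : ℂ))) y
          (EuclideanSpace.single i 1))
      = fun y => ((sp y : ℝ) : ℂ) * (Complex.exp (Complex.I * ((q y : ℝ) : ℂ))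
            * (Complex.I * ((fderiv ℝ q y (EuclideanSpace.single i 1) : ℝ) : ℂ)))
          + Complex.exp (Complex.I * ((q y : ℝ) : ℂ))
            * ((fderiv ℝ sp y (EuclideanSpace.single i 1) : ℝ) : ℂ) := by
    intro i; funext y
    erw [((hspC y).mul (hceD y)).fderiv]
    simp [ContinuousLinearMap.smul_apply, smul_eq_mul]
  unfold lapC
  have key : ∀ i : Fin d,
      fderiv ℝ (fun y => fderiv ℝ
          (fun z => ((sp z : ℝ) : ℂ) * Complex.exp (Complex.I * ((q z : ℝ) : ℂ))) y
          (EuclideanSpace.single i 1)) x (EuclideanSpace.single i 1)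
      = Complex.exp (Complex.I * ((q x : ℝ) : ℂ)) *
            (↑(fderiv ℝ (fun y => fderiv ℝ sp y (EuclideanSpace.single i 1)) x
                (EuclideanSpace.single i 1)) : ℂ)
        + (2 * Complex.I * Complex.exp (Complex.I * ((q x : ℝ) : ℂ))) *
            (↑(fderiv ℝ sp x (EuclideanSpace.single i 1)
                * fderiv ℝ q x (EuclideanSpace.single i 1)) : ℂ)
        + (Complex.I * (sp x : ℂ) * Complex.exp (Complex.I * ((q x : ℝ) : ℂ))) *
            (↑(fderiv ℝ (fun y => fderiv ℝ q y (EuclideanSpace.single i 1)) x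
                (EuclideanSpace.single i 1)) : ℂ)
        - ((sp x : ℂ) * Complex.exp (Complex.I * ((q x : ℝ) : ℂ))) *
            (↑((fderiv ℝ q x (EuclideanSpace.single i 1)) ^ 2) : ℂ) := by
    intro i
    rw [hfd i]
    have hcSpi : HasFDerivAt
        (fun y => ((fderiv ℝ sp y (EuclideanSpace.single i 1) : ℝ) : ℂ))
        (Complex.ofRealCLM.comp
          (fderiv ℝ (fun y => fderiv ℝ sp y (EuclideanSpace.single i 1)) x)) x :=
      Complex.ofRealCLM.hasFDerivAt.comp x
        (((hspi i).differentiable one_ne_zero) x).hasFDerivAt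
    have hcQi : HasFDerivAt
        (fun y => ((fderiv ℝ q y (EuclideanSpace.single i 1) : ℝ) : ℂ))
        (Complex.ofRealCLM.comp
          (fderiv ℝ (fun y => fderiv ℝ q y (EuclideanSpace.single i 1)) x)) x :=
      Complex.ofRealCLM.hasFDerivAt.comp x
        (((hqi i).differentiable one_ne_zero) x).hasFDerivAt
    have hT1 := (hspC x).mul ((hceD x).mul (hcQi.const_mul Complex.I))
    have hT2 := (hceD x).mul hcSpi
    erw [(hT1.add hT2).fderiv]
    simp [ContinuousLinearMap.smul_apply, smul_eq_mul]
    push_cast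
    ring_nf
    rw [Complex.I_sq]
    ring
  rw [Finset.sum_congr rfl fun i _ => key i]
  rw [Finset.sum_sub_distrib, Finset.sum_add_distrib, Finset.sum_add_distrib,
    ← Finset.mul_sum, ← Finset.mul_sum, ← Finset.mul_sum, ← Finset.mul_sum]
  push_cast
  ring

/-- **Madelung transform of the Madelung system solves the Wong–Zakai nonlinear Schrödinger
equation (first direction of Proposition 4.1).**  If `(ρ, S)` (with `ρ > 0`, `C¹` in time and
`C²` in space) solves the Madelung system
`∂ₜρ = −2∇·(ρ∇S)`, `∂ₜS = −|∇S|² + Δρ/(2ρ) − |∇ρ|²/(4ρ²) + λ f(ρ) + W`,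
then `u = √ρ e^{iS}` solves `∂ₜu = iΔu + iλ f(|u|²) u + i u W` on `[0,T] × ℝ^d`. -/
theorem madelung_solves_wong_zakai_nls
    (d : ℕ) (T lam : ℝ) (hT : 0 < T)
    (f : ℝ → ℝ) (hf : Continuous f)
    (W : ℝ → EuclideanSpace ℝ (Fin d) → ℝ)
    (hW : Continuous fun q : ℝ × EuclideanSpace ℝ (Fin d) => W q.1 q.2)
    (ρ S : ℝ → EuclideanSpace ℝ (Fin d) → ℝ)
    (hρt : ∀ x, ContDiff ℝ 1 fun t => ρ t x) (hρx : ∀ t, ContDiff ℝ 2 (ρ t))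
    (hSt : ∀ x, ContDiff ℝ 1 fun t => S t x) (hSx : ∀ t, ContDiff ℝ 2 (S t))
    (hρpos : ∀ t x, 0 < ρ t x)
    (hcontinuity : ∀ t ∈ Set.Icc (0 : ℝ) T, ∀ x,
      deriv (fun s => ρ s x) t
        = -2 * divg (fun y => ρ t y • gradient (S t) y) x)
    (hHJ : ∀ t ∈ Set.Icc (0 : ℝ) T, ∀ x,
      deriv (fun s => S s x) t
        = -‖gradient (S t) x‖ ^ 2 + lapR (ρ t) x / (2 * ρ t x)
          - ‖gradient (ρ t) x‖ ^ 2 / (4 * (ρ t x) ^ 2) + lam * f (ρ t x) + W t x) :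
    ∀ t ∈ Set.Icc (0 : ℝ) T, ∀ x,
      deriv (fun s => madelung ρ S s x) t
        = Complex.I * lapC (fun y => madelung ρ S t y) x
          + Complex.I * (lam : ℂ) * (f (‖madelung ρ S t x‖ ^ 2) : ℂ) * madelung ρ S t x
          + Complex.I * madelung ρ S t x * (W t x : ℂ) := by
  intro t ht x
  have one_le : (1 : WithTop ℕ∞) ≤ 2 := by norm_num
  have hppos : ∀ y, (0:ℝ) < ρ t y := hρpos t
  have hp2 : ContDiff ℝ 2 (ρ t) := hρx t
  have hq2 : ContDiff ℝ 2 (S t) := hSx t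
  have hsp2 : ContDiff ℝ 2 (fun y => Real.sqrt (ρ t y)) :=
    contDiff_iff_contDiffAt.2 fun y =>
      (Real.contDiffAt_sqrt (hppos y).ne').comp y hp2.contDiffAt
  have hpd : Differentiable ℝ (ρ t) := hp2.differentiable (by norm_num)
  have hρfun : ρ t = fun z => Real.sqrt (ρ t z) * Real.sqrt (ρ t z) :=
    funext fun z => (Real.mul_self_sqrt (hppos z).le).symm
  set s0 : ℝ := Real.sqrt (ρ t x) with hs0
  have hs0pos : 0 < s0 := Real.sqrt_pos.2 (hppos x)
  have hP : ρ t x = s0 * s0 := (Real.mul_self_sqrt (hppos x).le).symm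
  set α : ℝ := ∑ i, fderiv ℝ (fun y => fderiv ℝ (fun z => Real.sqrt (ρ t z)) y
      (EuclideanSpace.single i 1)) x (EuclideanSpace.single i 1) with hα
  set γ : ℝ := ∑ i, fderiv ℝ (fun y => Real.sqrt (ρ t y)) x (EuclideanSpace.single i 1)
      * fderiv ℝ (S t) x (EuclideanSpace.single i 1) with hγ
  set β : ℝ := ∑ i, fderiv ℝ (fun y => fderiv ℝ (S t) y (EuclideanSpace.single i 1)) x
      (EuclideanSpace.single i 1) with hβ
  set g2 : ℝ := ∑ i, (fderiv ℝ (S t) x (EuclideanSpace.single i 1)) ^ 2 with hg2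
  set σ' : ℝ := ∑ i, (fderiv ℝ (fun y => Real.sqrt (ρ t y)) x (EuclideanSpace.single i 1)) ^ 2
    with hσ
  -- spatial Laplacian of u
  have hlapC : lapC (fun y => madelung ρ S t y) x
      = Complex.exp (Complex.I * ((S t x : ℝ) : ℂ)) *
          ((α:ℂ) + 2 * Complex.I * (γ:ℂ) + Complex.I * (s0:ℂ) * (β:ℂ) - (s0:ℂ) * (g2:ℂ)) := by
    have h := spatial (fun y => Real.sqrt (ρ t y)) (S t) hsp2 hq2 x
    rw [hs0, hα, hγ, hβ, hg2]
    exact h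
  -- Laplacian of ρ
  have hlapR : lapR (ρ t) x = 2 * s0 * α + 2 * σ' := by
    rw [hs0, hα, hσ]
    conv_lhs => rw [hρfun]
    exact lapR_mul_self _ hsp2 x
  -- gradient of ρ in terms of √ρ
  have hdp : fderiv ℝ (ρ t) x = (2 * s0) • fderiv ℝ (fun y => Real.sqrt (ρ t y)) x := by
    conv_lhs => rw [hρfun]
    rw [fderiv_mul_self _ (hsp2.differentiable (by norm_num)) x, hs0]
  -- norms of gradients
  have hgq : ‖gradient (S t) x‖ ^ 2 = g2 := by rw [hg2]; exact norm_grad_sq _ x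
  have hgp : ‖gradient (ρ t) x‖ ^ 2 = 4 * (s0 * s0) * σ' := by
    rw [norm_grad_sq, hσ, Finset.mul_sum]
    refine Finset.sum_congr rfl fun i _ => ?_
    rw [hdp]
    simp [smul_eq_mul]
    ring
  -- divergence term
  have hdivg : divg (fun y => ρ t y • gradient (S t) y) x = 2 * s0 * γ + (s0 * s0) * β := by
    rw [divg_smul_grad (ρ t) (S t) hpd hq2 x]
    rw [hγ, hβ, Finset.mul_sum, Finset.mul_sum, ← Finset.sum_add_distrib]
    refine Finset.sum_congr rfl fun i _ => ?_
    rw [hdp, hP]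
    simp [smul_eq_mul]
    ring
  -- norm of u
  have hnormu : ‖madelung ρ S t x‖ ^ 2 = ρ t x := by
    have hm : madelung ρ S t x
        = (Real.sqrt (ρ t x) : ℂ) * Complex.exp (Complex.I * ((S t x : ℝ) : ℂ)) := rfl
    rw [hm, norm_mul, mul_pow]
    simp [Complex.norm_exp, Complex.norm_real,
      abs_of_nonneg (Real.sqrt_nonneg _), Real.sq_sqrt (hppos x).le]
  -- time derivative of u
  have hdt : deriv (fun s => madelung ρ S s x) t
      = ((deriv (fun s => ρ s x) t / (2 * s0) : ℝ) : ℂ)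
            * Complex.exp (Complex.I * ((S t x : ℝ) : ℂ))
        + (s0 : ℂ) * (Complex.exp (Complex.I * ((S t x : ℝ) : ℂ))
            * (Complex.I * ((deriv (fun s => S s x) t : ℝ) : ℂ))) := by
    have hr : HasDerivAt (fun s => ρ s x) (deriv (fun s => ρ s x) t) t :=
      ((hρt x).differentiable one_ne_zero t).hasDerivAt
    have hs : HasDerivAt (fun s => S s x) (deriv (fun s => S s x) t) t :=
      ((hSt x).differentiable one_ne_zero t).hasDerivAt
    have hA := (hr.sqrt (hppos x).ne').ofReal_comp
    have hB := ((hs.ofReal_comp).const_mul Complex.I).cexp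
    exact (hA.mul hB).deriv
  -- assemble
  have hmad : madelung ρ S t x
      = (s0 : ℂ) * Complex.exp (Complex.I * ((S t x : ℝ) : ℂ)) := rfl
  rw [hdt, hlapC, hnormu, hmad, hcontinuity t ht x, hHJ t ht x, hdivg, hgq, hgp, hlapR, hP]
  have hs0c : (s0 : ℂ) ≠ 0 := Complex.ofReal_ne_zero.2 hs0pos.ne'
  push_cast
  field_simp [hs0c]
  ring_nf
  simp only [Complex.I_sq]
  field_simp [hs0c]
  ring
end
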